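/- Let k, ℓ > 0, let π1 ∈ T_k and π2 ∈ T_ℓ, let 1 ≤ i ≤ slmax(π2), and let a_i be the i-th left-to-right maximum of S(π2). Then the concatenated sequence τ = (S(π1))^{+(0,k,a_i)}·(S(π2))^{+(k−1,a_i+1,k)} avoids the pattern 231, i.e., there are no positions p < q < r in τ with τ(r) < τ(p) < τ(q). -/

import Mathlib

namespace TSP

theorem foldr_max_mem {α : Type} [LinearOrder α] (x : α) (l : List α) :
    l.foldr max x ∈ x :: l := by
  induction l with
  | nil => simp
  | cons a t ih =>
    simp only [List.foldr_cons]
    rcases max_choice a (t.foldr max x) with h | h <;> rw [h]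
    · simp
    · rcases List.mem_cons.mp ih with h' | h'
      · rw [h']; simp
      · exact List.mem_cons.mpr (Or.inr (List.mem_cons.mpr (Or.inr h')))

theorem length_takeWhile_lt {α : Type} [DecidableEq α] {m : α} {l : List α}
    (h : m ∈ l) : (l.takeWhile (· ≠ m)).length < l.length := by
  have hd : l.dropWhile (· ≠ m) ≠ [] := by
    intro hnil
    have := List.dropWhile_eq_nil_iff.mp hnil m h
    simp at this
  have hsum : (l.takeWhile (· ≠ m)).length + (l.dropWhile (· ≠ m)).length = l.length := by
    rw [← List.length_append, List.takeWhile_append_dropWhile]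
  have : 0 < (l.dropWhile (· ≠ m)).length := List.length_pos_iff.mpr hd
  omega

theorem length_tail_dropWhile_lt {α : Type} [DecidableEq α] {m : α} {l : List α}
    (h : l ≠ []) : ((l.dropWhile (· ≠ m)).tail).length < l.length := by
  have hsum : (l.takeWhile (· ≠ m)).length + (l.dropWhile (· ≠ m)).length = l.length := by
    rw [← List.length_append, List.takeWhile_append_dropWhile]
  have h2 : ((l.dropWhile (· ≠ m)).tail).length = (l.dropWhile (· ≠ m)).length - 1 :=
    List.length_tail
  have : 0 < l.length := List.length_pos_iff.mpr h
  omega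

/-- The stack-sorting operator `S`: `S(ε) = ε`, and if `A` is nonempty with
largest element `m` and `A = A_L · (m) · A_R`, then `S(A) = S(A_L) · S(A_R) · (m)`. -/
def S {α : Type} [LinearOrder α] : List α → List α
  | [] => []
  | x :: l =>
    let m := l.foldr max x
    S ((x :: l).takeWhile (· ≠ m)) ++ S (((x :: l).dropWhile (· ≠ m)).tail) ++ [m]
termination_by l => l.length
decreasing_by
  · exact length_takeWhile_lt (by rw [List.foldr_attach (f := fun a s => max a s)]; exact foldr_max_mem x l)
  · exact length_tail_dropWhile_lt (by simp)

/-- The identity permutation `id_n = (1, 2, …, n)` as a list. -/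
def idPerm (n : ℕ) : List ℕ := List.range' 1 n

/-- `l` is a permutation of `{1, …, n}` (viewed as a sequence). -/
def IsPermOf (n : ℕ) (l : List ℕ) : Prop := l.Perm (idPerm n)

/-- `l` is a two-stack sortable permutation (of `{1, …, len l}`). -/
def Is2SS (l : List ℕ) : Prop := IsPermOf l.length l ∧ S (S l) = idPerm l.length

/-- `σ^{+k}`: add `k` to every entry. -/
def shift (k : ℕ) (l : List ℕ) : List ℕ := l.map (· + k)

/-- `σ^{+(k1,m,k2)}`: add `k1` to every entry strictly smaller than `m`, `k2` to the others. -/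
def shift3 (k1 m k2 : ℕ) (l : List ℕ) : List ℕ :=
  l.map (fun a => if a < m then a + k1 else a + k2)

/-- Standardization `P(A)`: the permutation of `{1,…,len A}` in the same relative order. -/
def stand (l : List ℕ) : List ℕ := l.map (fun a => (l.filter (fun b => b ≤ a)).length)

/-- Avoidance of the pattern 231: no positions `i < j < k` with `l(k) < l(i) < l(j)`. -/
def Avoids231 (l : List ℕ) : Prop :=
  ¬ ∃ i j k, i < j ∧ j < k ∧ k < l.length ∧
      l.getD k 0 < l.getD i 0 ∧ l.getD i 0 < l.getD j 0

/-- The list of values of the left-to-right maxima of `l`, in order. -/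
def lrMaxima (l : List ℕ) : List ℕ :=
  ((List.range l.length).filter
    (fun i => (l.take i).all (fun b => b < l.getD i 0))).map (fun i => l.getD i 0)

/-- `lmax`: the number of left-to-right maxima. -/
def lmax (l : List ℕ) : ℕ :=
  (List.range l.length).countP (fun i => (l.take i).all (fun b => b < l.getD i 0))

/-- `rmax`: the number of right-to-left maxima. -/
def rmax (l : List ℕ) : ℕ :=
  (List.range l.length).countP (fun i => (l.drop (i+1)).all (fun b => b < l.getD i 0))

/-- `asc`: the number of ascents. -/
def asc (l : List ℕ) : ℕ :=
  (List.range (l.length - 1)).countP (fun i => l.getD i 0 < l.getD (i+1) 0)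

/-- `des`: the number of descents. -/
def des (l : List ℕ) : ℕ :=
  (List.range (l.length - 1)).countP (fun i => l.getD (i+1) 0 < l.getD i 0)

/-- `slmax(π)`: the number of left-to-right maxima of `S(π)`. -/
def slmax (l : List ℕ) : ℕ := lmax (S l)

/-- `sldes(π)`: the number of entries `a` that precede `a - 1` in `S(π)`. -/
def sldes (l : List ℕ) : ℕ :=
  (List.range (S l).length).countP
    (fun i => ((S l).drop (i+1)).any (fun b => b + 1 = (S l).getD i 0))

/-- The construction `C1(π1, π2) = π1 · (k+ℓ+1) · π2^{+k}`. -/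
def C1 (p1 p2 : List ℕ) : List ℕ :=
  p1 ++ (p1.length + p2.length + 1) :: shift p1.length p2

/-- The `i`-th left-to-right maximum `a_i` of `S(π2)` (1-indexed). -/
def lrm (p2 : List ℕ) (i : ℕ) : ℕ := (lrMaxima (S p2)).getD (i - 1) 0

/-- The construction `C2(π1, π2, i) = π1^{+(0,k,a_i)} · (k+ℓ+1) · π2^{+(k-1,a_i+1,k)}`. -/
def C2 (p1 p2 : List ℕ) (i : ℕ) : List ℕ :=
  shift3 0 p1.length (lrm p2 i) p1 ++
    (p1.length + p2.length + 1) :: shift3 (p1.length - 1) (lrm p2 i + 1) p1.length p2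

/-- The decomposition `D(π) = (P(π_ℓ), P(π_r))`, where `π = π_ℓ · (n) · π_r`
with `n` the largest entry of `π`. -/
def D (l : List ℕ) : List ℕ × List ℕ :=
  match l with
  | [] => ([], [])
  | x :: t =>
    let m := t.foldr max x
    (stand ((x :: t).takeWhile (· ≠ m)), stand (((x :: t).dropWhile (· ≠ m)).tail))


/-! ### Auxiliary lemmas -/

theorem le_foldr_max (x : ℕ) (l : List ℕ) : ∀ v ∈ x :: l, v ≤ l.foldr max x := by
  induction l generalizing x with
  | nil => intro v hv; simp at hv; simp [hv]
  | cons a t ih =>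
    intro v hv
    simp only [List.foldr_cons]
    rcases List.mem_cons.mp hv with h | h
    · rw [h]; exact le_max_of_le_right (ih x x (by simp))
    · rcases List.mem_cons.mp h with h' | h'
      · exact h' ▸ le_max_left _ _
      · exact le_max_of_le_right (ih x v (List.mem_cons_of_mem _ h'))

theorem dropWhile_ne_self {m : ℕ} {l : List ℕ} (h : m ∈ l) :
    l.dropWhile (· ≠ m) = m :: (l.dropWhile (· ≠ m)).tail := by
  have hd : l.dropWhile (· ≠ m) ≠ [] := by
    intro hnil
    have := List.dropWhile_eq_nil_iff.mp hnil m h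
    simp at this
  have h2 : decide (((l.dropWhile (· ≠ m)).head hd) ≠ m) = false :=
    List.head_dropWhile_not (fun b => decide (b ≠ m)) hd
  have h3 : (l.dropWhile (· ≠ m)).head hd = m := not_ne_iff.mp (decide_eq_false_iff_not.mp h2)
  conv_lhs => rw [← List.cons_head_tail hd]
  rw [h3]

theorem S_cons (x : ℕ) (t : List ℕ) :
    S (x :: t) = S ((x::t).takeWhile (· ≠ t.foldr max x)) ++
      S (((x::t).dropWhile (· ≠ t.foldr max x)).tail) ++ [t.foldr max x] := by
  rw [S]

theorem split_eq (x : ℕ) (t : List ℕ) :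
    x :: t = (x::t).takeWhile (· ≠ t.foldr max x) ++
      (t.foldr max x) :: ((x::t).dropWhile (· ≠ t.foldr max x)).tail := by
  conv_lhs => rw [← List.takeWhile_append_dropWhile (p := (· ≠ t.foldr max x)) (l := x :: t)]
  rw [← dropWhile_ne_self (foldr_max_mem x t)]

theorem S_perm : ∀ (l : List ℕ), (S l).Perm l
  | [] => by simp [S]
  | x :: t => by
    rw [S_cons]
    have h1 := S_perm ((x::t).takeWhile (· ≠ t.foldr max x))
    have h2 := S_perm (((x::t).dropWhile (· ≠ t.foldr max x)).tail)
    conv_rhs => rw [split_eq x t]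
    exact ((h1.append h2).append_right [t.foldr max x]).trans
      (by rw [List.append_assoc]
          exact List.Perm.append_left _ (List.perm_append_singleton _ _))
termination_by l => l.length
decreasing_by
  · exact length_takeWhile_lt (foldr_max_mem x t)
  · exact length_tail_dropWhile_lt (by simp)

/-- A sublist-based 231 pattern. -/
def Pat (l : List ℕ) : Prop := ∃ x y z, List.Sublist [x, y, z] l ∧ z < x ∧ x < y

theorem sublist3 {l : List ℕ} {i j r : ℕ} (hij : i < j) (hjr : j < r) (hr : r < l.length) :
    List.Sublist [l[i]'(by omega), l[j]'(by omega), l[r]] l := by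
  have hi : i < l.length := by omega
  have hj : j < l.length := by omega
  have hdj : List.Sublist (l.drop j) (l.drop (i+1)) := by
    rw [show j = (i+1) + (j - (i+1)) by omega, ← List.drop_drop]
    exact List.drop_sublist _ _
  have hdr : List.Sublist (l.drop r) (l.drop (j+1)) := by
    rw [show r = (j+1) + (r - (j+1)) by omega, ← List.drop_drop]
    exact List.drop_sublist _ _
  have s3 : List.Sublist [l[r]] (l.drop (j+1)) := by
    refine List.Sublist.trans ?_ hdr
    rw [List.drop_eq_getElem_cons hr]
    exact (List.nil_sublist _).cons₂ _
  have s2 : List.Sublist [l[j], l[r]] (l.drop (i+1)) := by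
    refine List.Sublist.trans ?_ hdj
    rw [List.drop_eq_getElem_cons hj]
    exact s3.cons₂ _
  refine List.Sublist.trans ?_ (List.drop_sublist i l)
  rw [List.drop_eq_getElem_cons hi]
  exact s2.cons₂ _

theorem pat_of_indices {l : List ℕ} {i j r : ℕ} (hij : i < j) (hjr : j < r) (hr : r < l.length)
    (h1 : l[r] < l[i]'(by omega)) (h2 : l[i]'(by omega) < l[j]'(by omega)) : Pat l :=
  ⟨_, _, _, sublist3 hij hjr hr, h1, h2⟩

theorem no_pat_of_sorted_S : ∀ (l : List ℕ), l.Nodup → (S l).Pairwise (· < ·) → ¬ Pat l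
  | [] => by
    rintro _ _ ⟨x, y, z, hsub, _, _⟩
    simp at hsub
  | x :: t => by
    intro hnd hsorted
    set m := t.foldr max x with hm
    set T := (x::t).takeWhile (· ≠ m) with hT
    set R := ((x::t).dropWhile (· ≠ m)).tail with hR
    have hsplit : x :: t = T ++ m :: R := split_eq x t
    have hmax : ∀ v ∈ x :: t, v ≤ m := le_foldr_max x t
    have hs : (S T ++ (S R ++ [m])).Pairwise (· < ·) := by
      have h0 := hsorted
      rw [S_cons x t, List.append_assoc] at h0
      exact h0
    rw [List.pairwise_append] at hs
    obtain ⟨hsT, hsR', hcross'⟩ := hs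
    have hsR : (S R).Pairwise (· < ·) := (List.pairwise_append.mp hsR').1
    have hcross : ∀ u ∈ T, ∀ v ∈ R, u < v := by
      intro u hu v hv
      exact hcross' u ((S_perm T).mem_iff.mpr hu) v
        (List.mem_append_left _ ((S_perm R).mem_iff.mpr hv))
    rw [hsplit] at hnd
    have hndT : T.Nodup := hnd.of_append_left
    have hndR : R.Nodup := (List.nodup_cons.mp hnd.of_append_right).2
    have ihT := no_pat_of_sorted_S T hndT hsT
    have ihR := no_pat_of_sorted_S R hndR hsR
    rintro ⟨X, Y, Z, hsub, hzx, hxy⟩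
    rw [hsplit] at hsub
    rcases List.sublist_append_iff.mp hsub with ⟨u, v, huv, hu, hv⟩
    have hmemT : ∀ w, w ∈ T → w ∈ x :: t := by
      intro w hw; rw [hsplit]; exact List.mem_append_left _ hw
    have hmemR : ∀ w, w ∈ R → w ∈ x :: t := by
      intro w hw; rw [hsplit]; exact List.mem_append_right _ (List.mem_cons_of_mem _ hw)
    rcases u with _ | ⟨a, _ | ⟨b, _ | ⟨c, _ | ⟨d, u⟩⟩⟩⟩
    · simp only [List.nil_append] at huv
      subst huv
      rcases List.sublist_cons_iff.mp hv with h | ⟨r', hr', hsubr⟩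
      · exact ihR ⟨X, Y, Z, h, hzx, hxy⟩
      · injection hr' with h1 h2
        subst h1 h2
        have hY : Y ∈ R := hsubr.subset (by simp)
        exact absurd (hmax Y (hmemR Y hY)) (by omega)
    · simp only [List.cons_append, List.nil_append, List.cons.injEq] at huv
      obtain ⟨rfl, huv2⟩ := huv
      subst huv2
      have hXT : X ∈ T := hu.subset (by simp)
      rcases List.sublist_cons_iff.mp hv with h | ⟨r', hr', hsubr⟩
      · have hZ : Z ∈ R := h.subset (by simp)
        exact absurd (hcross X hXT Z hZ) (by omega)
      · injection hr' with h1 h2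
        subst h1 h2
        have hZ : Z ∈ R := hsubr.subset (by simp)
        exact absurd (hcross X hXT Z hZ) (by omega)
    · simp only [List.cons_append, List.nil_append, List.cons.injEq] at huv
      obtain ⟨rfl, rfl, huv3⟩ := huv
      subst huv3
      have hXT : X ∈ T := hu.subset (by simp)
      rcases List.sublist_cons_iff.mp hv with h | ⟨r', hr', hsubr⟩
      · have hZ : Z ∈ R := h.subset (by simp)
        exact absurd (hcross X hXT Z hZ) (by omega)
      · injection hr' with h1 h2
        subst h1
        exact absurd (hmax X (hmemT X hXT)) (by omega)
    · simp only [List.cons_append, List.nil_append, List.cons.injEq] at huv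
      obtain ⟨rfl, rfl, rfl, hv0⟩ := huv
      exact ihT ⟨X, Y, Z, hu, hzx, hxy⟩
    · simp at huv
termination_by l => l.length
decreasing_by
  · exact length_takeWhile_lt (foldr_max_mem x t)
  · exact length_tail_dropWhile_lt (by simp)


theorem f1_lt {k a x y : ℕ}
    (h : (if x < k then x + 0 else x + a) < (if y < k then y + 0 else y + a)) : x < y := by
  split_ifs at h <;> omega

theorem f2_lt {k a x y : ℕ}
    (h : (if x < a + 1 then x + (k-1) else x + k) <
      (if y < a + 1 then y + (k-1) else y + k)) : x < y := by
  split_ifs at h <;> omega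

theorem mix1 {k a x y c : ℕ} (hk : 1 ≤ k) (hc : 1 ≤ c) (hx : x ≤ k) (hy : y ≤ k)
    (h1 : (if c < a+1 then c+(k-1) else c+k) < (if x < k then x+0 else x+a))
    (h2 : (if x < k then x+0 else x+a) < (if y < k then y+0 else y+a)) : False := by
  split_ifs at h1 h2 <;> omega

theorem mix2 {k a x c d : ℕ} (hk : 1 ≤ k) (hc : 1 ≤ c) (hx : x ≤ k)
    (h1 : (if c < a+1 then c+(k-1) else c+k) < (if x < k then x+0 else x+a))
    (h2 : (if x < k then x+0 else x+a) < (if d < a+1 then d+(k-1) else d+k)) :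
    c ≤ a ∧ a < d := by
  split_ifs at h1 h2 <;> omega

set_option maxHeartbeats 1000000 in
/-- For `k, ℓ > 0`, `π1 ∈ T_k`, `π2 ∈ T_ℓ`, `1 ≤ i ≤ slmax(π2)` and `a_i`
the `i`-th left-to-right maximum of `S(π2)`, the concatenation
`τ = (S(π1))^{+(0,k,a_i)} · (S(π2))^{+(k−1,a_i+1,k)}` avoids the pattern 231. -/
theorem tau_avoids231 (k ℓ : ℕ) (hk : 0 < k) (hℓ : 0 < ℓ) (π1 π2 : List ℕ)
    (h1 : π1.length = k) (h1' : Is2SS π1) (h2 : π2.length = ℓ) (h2' : Is2SS π2)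
    (i : ℕ) (hi1 : 1 ≤ i) (hi2 : i ≤ slmax π2) (a : ℕ) (ha : a = lrm π2 i) :
    Avoids231 (shift3 0 k a (S π1) ++ shift3 (k - 1) (a + 1) k (S π2)) := by
  -- basic permutation facts
  have hw1 : (S π1).Perm (idPerm k) := (S_perm π1).trans (by rw [← h1]; exact h1'.1)
  have hw2 : (S π2).Perm (idPerm ℓ) := (S_perm π2).trans (by rw [← h2]; exact h2'.1)
  have hlen1 : (S π1).length = k := by rw [hw1.length_eq, idPerm, List.length_range']
  have hlen2 : (S π2).length = ℓ := by rw [hw2.length_eq, idPerm, List.length_range']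
  have hbound1 : ∀ v ∈ S π1, 1 ≤ v ∧ v ≤ k := by
    intro v hv
    have hv' := hw1.subset hv
    rw [idPerm] at hv'
    have := List.mem_range'_1.mp hv'
    omega
  have hbound2 : ∀ v ∈ S π2, 1 ≤ v ∧ v ≤ ℓ := by
    intro v hv
    have hv' := hw2.subset hv
    rw [idPerm] at hv'
    have := List.mem_range'_1.mp hv'
    omega
  have hnd2 : (S π2).Nodup := hw2.nodup_iff.mpr (List.nodup_range' ..)
  have hnd1 : (S π1).Nodup := hw1.nodup_iff.mpr (List.nodup_range' ..)
  have hpat1 : ¬ Pat (S π1) := by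
    refine no_pat_of_sorted_S _ hnd1 ?_
    have hid := h1'.2
    rw [h1] at hid
    rw [hid, idPerm]
    exact List.pairwise_lt_range' ..
  have hpat2 : ¬ Pat (S π2) := by
    refine no_pat_of_sorted_S _ hnd2 ?_
    have hid := h2'.2
    rw [h2] at hid
    rw [hid, idPerm]
    exact List.pairwise_lt_range' ..
  -- extract the position of the i-th left-to-right maximum a
  have hia : i - 1 < (lrMaxima (S π2)).length := by
    have hsl : slmax π2 = (lrMaxima (S π2)).length := by
      rw [slmax, lmax, lrMaxima, List.length_map, ← List.countP_eq_length_filter]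
    omega
  have hamem : a ∈ lrMaxima (S π2) := by
    rw [ha, lrm, List.getD_eq_getElem _ _ hia]
    exact List.getElem_mem hia
  rw [lrMaxima] at hamem
  obtain ⟨t, htf, hta⟩ := List.mem_map.mp hamem
  obtain ⟨htr, htp⟩ := List.mem_filter.mp htf
  have htlen : t < (S π2).length := List.mem_range.mp htr
  have hta' : (S π2)[t] = a := by rw [← hta, List.getD_eq_getElem _ _ htlen]
  have hlt : ∀ s, (hs : s < t) → (S π2)[s]'(by omega) < a := by
    intro s hs
    have hsl : s < ((S π2).take t).length := by
      rw [List.length_take]; omega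
    have hmem : (S π2)[s]'(by omega) ∈ (S π2).take t := by
      have : ((S π2).take t)[s] = (S π2)[s]'(by omega) := List.getElem_take ..
      rw [← this]
      exact List.getElem_mem hsl
    have hall := List.all_eq_true.mp htp _ hmem
    rw [List.getD_eq_getElem _ _ htlen, hta'] at hall
    exact of_decide_eq_true hall
  have hba : 1 ≤ a ∧ a ≤ ℓ := hbound2 _ (hta' ▸ List.getElem_mem htlen)
  -- the pattern argument
  rw [shift3, shift3]
  clear hamem htf htr htp hta hw1 hw2 ha hi1 hi2 hia
  generalize hg1 : S π1 = w1 at hlen1 hbound1 hpat1 ⊢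
  have hlt' : ∀ s (hs : s < t) (hs' : s < (S π2).length), (S π2)[s]'hs' < a :=
    fun s hs hs' => hlt s hs
  clear hlt
  generalize hg2 : S π2 = w2 at htlen hta' hlt' hlen2 hbound2 hnd2 hpat2 ⊢
  have hlt : ∀ s, (hs : s < t) → w2[s]'(by omega) < a := fun s hs => hlt' s hs _
  rintro ⟨p, q, r, hpq, hqr, hrlen, hv1, hv2⟩
  have hlenτ : (w1.map (fun x => if x < k then x + 0 else x + a) ++
      w2.map (fun x => if x < a + 1 then x + (k-1) else x + k)).length = k + ℓ := by
    rw [List.length_append, List.length_map, List.length_map, hlen1, hlen2]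
  rw [hlenτ] at hrlen
  have getA : ∀ idx, (h : idx < k) →
      (w1.map (fun x => if x < k then x + 0 else x + a) ++
        w2.map (fun x => if x < a + 1 then x + (k-1) else x + k)).getD idx 0 =
      (if w1[idx]'(by omega) < k then w1[idx]'(by omega) + 0
        else w1[idx]'(by omega) + a) := by
    intro idx h
    rw [List.getD_append _ _ _ _ (by rw [List.length_map, hlen1]; omega),
      List.getD_eq_getElem _ _ (by rw [List.length_map, hlen1]; omega), List.getElem_map]
  have getB : ∀ idx, (h1x : k ≤ idx) → (h2x : idx < k + ℓ) →
      (w1.map (fun x => if x < k then x + 0 else x + a) ++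
        w2.map (fun x => if x < a + 1 then x + (k-1) else x + k)).getD idx 0 =
      (if w2[idx - k]'(by omega) < a + 1 then w2[idx - k]'(by omega) + (k-1)
        else w2[idx - k]'(by omega) + k) := by
    intro idx h1x h2x
    have e1 : (w1.map (fun x => if x < k then x + 0 else x + a)).length = k := by
      rw [List.length_map, hlen1]
    rw [List.getD_append_right _ _ _ _ (by omega), e1,
      List.getD_eq_getElem _ _ (by rw [List.length_map, hlen2]; omega), List.getElem_map]
  by_cases hrA : r < k
  · -- all three indices in the first block
    rw [getA p (hpq.trans (hqr.trans hrA)), getA r hrA] at hv1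
    rw [getA p (hpq.trans (hqr.trans hrA)), getA q (hqr.trans hrA)] at hv2
    exact hpat1 (pat_of_indices hpq hqr (by omega : r < w1.length) (f1_lt hv1) (f1_lt hv2))
  · by_cases hqA : q < k
    · -- p, q in first block, r in second
      rw [getA p (hpq.trans hqA), getB r (Nat.le_of_not_lt hrA) hrlen] at hv1
      rw [getA p (hpq.trans hqA), getA q hqA] at hv2
      have hc := hbound2 _ (List.getElem_mem (by omega : r - k < w2.length))
      have hp1 := hbound1 _ (List.getElem_mem (by omega : p < w1.length))
      have hq1 := hbound1 _ (List.getElem_mem (by omega : q < w1.length))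
      exact mix1 hk hc.1 hp1.2 hq1.2 hv1 hv2
    · by_cases hpA : p < k
      · -- p in first block, q, r in second: the interesting case
        rw [getA p hpA, getB r (Nat.le_of_not_lt hrA) hrlen] at hv1
        rw [getA p hpA, getB q (Nat.le_of_not_lt hqA) (hqr.trans hrlen)] at hv2
        have hc := hbound2 _ (List.getElem_mem (by omega : r - k < w2.length))
        have hd := hbound2 _ (List.getElem_mem (by omega : q - k < w2.length))
        have hp1 := hbound1 _ (List.getElem_mem (by omega : p < w1.length))
        obtain ⟨hca, hda⟩ := mix2 hk hc.1 hp1.2 hv1 hv2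
        have hq2 : q - k < w2.length := by omega
        have hr2 : r - k < w2.length := by omega
        have hca' : w2[r - k]'hr2 ≤ a := hca
        have hda' : a < w2[q - k]'hq2 := hda
        have htq : t < q - k := by
          rcases lt_trichotomy t (q - k) with h | h | h
          · exact h
          · exfalso
            have heq : w2[q - k]'hq2 = a := by
              subst h; exact hta'
            omega
          · exfalso
            have hlt2 : w2[q - k]'hq2 < a := hlt _ h
            omega
        have hqr' : q - k < r - k := by omega
        have hcane : w2[r - k]'hr2 ≠ a := by
          intro he
          have : r - k = t := (List.Nodup.getElem_inj_iff hnd2).mp (by rw [he]; exact hta'.symm)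
          omega
        apply hpat2
        refine pat_of_indices htq hqr' hr2 ?_ ?_
        · exact lt_of_lt_of_le (show w2[r - k]'hr2 < a by omega) (le_of_eq hta'.symm)
        · exact lt_of_le_of_lt (le_of_eq hta') hda' 
      · -- all three indices in the second block
        rw [getB p (Nat.le_of_not_lt hpA) ((hpq.trans hqr).trans hrlen),
          getB r (Nat.le_of_not_lt hrA) hrlen] at hv1
        rw [getB p (Nat.le_of_not_lt hpA) ((hpq.trans hqr).trans hrlen),
          getB q (Nat.le_of_not_lt hqA) (hqr.trans hrlen)] at hv2
        exact hpat2 (pat_of_indices (show p - k < q - k by omega) (show q - k < r - k by omega)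
          (by omega : r - k < w2.length) (f2_lt hv1) (f2_lt hv2))
end TSP
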